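/- For all non-negative integers m, k with k ≥ 2, the integrals I_{m,k} = ∫₀^{π/2} x^{2m} cos^{2k-1}(x) dx satisfy the recurrence ((2k-2)/(2k-1)) I_{m,k-1} − I_{m,k} = (2m(2m-1)/(2k-1)²) I_{m-1,k} (for m ≥ 1), and I_{m,1} + 2m(2m-1) I_{m-1,1} = (π/2)^{2m}. -/

import Mathlib

open Real Finset

/-- `I_{m,k} = ∫₀^{π/2} x^{2m} cos^{2k-1}(x) dx`. -/
noncomputable def I (m k : ℕ) : ℝ := ∫ x in (0:ℝ)..(π/2), x^(2*m) * (Real.cos x)^(2*k-1)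

lemma rel1 (p q : ℕ) :
    ((p:ℝ)+1) * (∫ x in (0:ℝ)..(π/2), x^p * (Real.sin x * (Real.cos x)^(q+1)))
      + (((q:ℝ)+2) * (∫ x in (0:ℝ)..(π/2), x^(p+1) * (Real.cos x)^(q+2))
        - ((q:ℝ)+1) * (∫ x in (0:ℝ)..(π/2), x^(p+1) * (Real.cos x)^q)) = 0 := by
  have h : ∀ x ∈ Set.uIcc (0:ℝ) (π/2),
      HasDerivAt (fun y : ℝ => y^(p+1) * (Real.sin y * (Real.cos y)^(q+1)))
        (((p:ℝ)+1) * (x^p * (Real.sin x * (Real.cos x)^(q+1)))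
          + (((q:ℝ)+2) * (x^(p+1) * (Real.cos x)^(q+2))
            - ((q:ℝ)+1) * (x^(p+1) * (Real.cos x)^q))) x := by
    intro x _
    have h1 : HasDerivAt (fun y:ℝ => y^(p+1)) (((p:ℝ)+1) * x^p) x := by
      simpa using hasDerivAt_pow (p+1) x
    have h3 : HasDerivAt (fun y:ℝ => (Real.cos y)^(q+1))
        ((((q:ℝ)+1) * (Real.cos x)^q) * (-Real.sin x)) x := by
      simpa using (Real.hasDerivAt_cos x).fun_pow (q+1)
    have h4 := (Real.hasDerivAt_sin x).mul h3
    have h5 := h1.mul h4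
    refine h5.congr_deriv ?_
    simp only [Pi.mul_apply]
    have hs := Real.sin_sq_add_cos_sq x
    linear_combination (-((q:ℝ)+1)) * x^(p+1) * Real.cos x ^ q * hs
  have hint : IntervalIntegrable (fun x : ℝ =>
      ((p:ℝ)+1) * (x^p * (Real.sin x * (Real.cos x)^(q+1)))
        + (((q:ℝ)+2) * (x^(p+1) * (Real.cos x)^(q+2))
          - ((q:ℝ)+1) * (x^(p+1) * (Real.cos x)^q))) MeasureTheory.volume 0 (π/2) := by
    apply Continuous.intervalIntegrable; fun_prop
  have key := intervalIntegral.integral_eq_sub_of_hasDerivAt h hint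
  have hcos : Real.cos (π/2) = 0 := Real.cos_pi_div_two
  rw [hcos] at key
  simp only [zero_pow (Nat.succ_ne_zero q), mul_zero, zero_pow (Nat.succ_ne_zero p),
    zero_mul, sub_zero] at key
  rw [intervalIntegral.integral_add, intervalIntegral.integral_sub,
    intervalIntegral.integral_const_mul, intervalIntegral.integral_const_mul,
    intervalIntegral.integral_const_mul] at key
  · linarith
  all_goals apply Continuous.intervalIntegrable; fun_prop

lemma rel2 (p q : ℕ) :
    ((p:ℝ)+1) * (∫ x in (0:ℝ)..(π/2), x^p * (Real.cos x)^(q+1))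
      = ((q:ℝ)+1) * (∫ x in (0:ℝ)..(π/2), x^(p+1) * (Real.sin x * (Real.cos x)^q)) := by
  have h : ∀ x ∈ Set.uIcc (0:ℝ) (π/2),
      HasDerivAt (fun y : ℝ => y^(p+1) * (Real.cos y)^(q+1))
        (((p:ℝ)+1) * (x^p * (Real.cos x)^(q+1))
          - ((q:ℝ)+1) * (x^(p+1) * (Real.sin x * (Real.cos x)^q))) x := by
    intro x _
    have h1 : HasDerivAt (fun y:ℝ => y^(p+1)) (((p:ℝ)+1) * x^p) x := by
      simpa using hasDerivAt_pow (p+1) x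
    have h3 : HasDerivAt (fun y:ℝ => (Real.cos y)^(q+1))
        ((((q:ℝ)+1) * (Real.cos x)^q) * (-Real.sin x)) x := by
      simpa using (Real.hasDerivAt_cos x).fun_pow (q+1)
    have h5 := h1.mul h3
    refine h5.congr_deriv ?_
    ring
  have hint : IntervalIntegrable (fun x : ℝ =>
      ((p:ℝ)+1) * (x^p * (Real.cos x)^(q+1))
        - ((q:ℝ)+1) * (x^(p+1) * (Real.sin x * (Real.cos x)^q)))
      MeasureTheory.volume 0 (π/2) := by
    apply Continuous.intervalIntegrable; fun_prop
  have key := intervalIntegral.integral_eq_sub_of_hasDerivAt h hint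
  have hcos : Real.cos (π/2) = 0 := Real.cos_pi_div_two
  rw [hcos] at key
  simp only [zero_pow (Nat.succ_ne_zero q), mul_zero, zero_pow (Nat.succ_ne_zero p),
    zero_mul, sub_zero] at key
  rw [intervalIntegral.integral_sub, intervalIntegral.integral_const_mul,
    intervalIntegral.integral_const_mul] at key
  · linarith
  all_goals apply Continuous.intervalIntegrable; fun_prop

lemma rel3 (p : ℕ) :
    (∫ x in (0:ℝ)..(π/2), x^(p+2) * Real.cos x)
      + ((p:ℝ)+2)*((p:ℝ)+1) * (∫ x in (0:ℝ)..(π/2), x^p * Real.cos x)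
      = (π/2)^(p+2) := by
  have h : ∀ x ∈ Set.uIcc (0:ℝ) (π/2),
      HasDerivAt (fun y : ℝ => y^(p+2) * Real.sin y + ((p:ℝ)+2) * (y^(p+1) * Real.cos y))
        (x^(p+2) * Real.cos x + ((p:ℝ)+2)*((p:ℝ)+1) * (x^p * Real.cos x)) x := by
    intro x _
    have h1 : HasDerivAt (fun y:ℝ => y^(p+2)) (((p:ℝ)+2) * x^(p+1)) x := by
      simpa using hasDerivAt_pow (p+2) x
    have h2 : HasDerivAt (fun y:ℝ => y^(p+1)) (((p:ℝ)+1) * x^p) x := by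
      simpa using hasDerivAt_pow (p+1) x
    have h5 := (h1.mul (Real.hasDerivAt_sin x)).add
      (((h2.mul (Real.hasDerivAt_cos x))).const_mul ((p:ℝ)+2))
    refine h5.congr_deriv ?_
    ring
  have hint : IntervalIntegrable (fun x : ℝ =>
      x^(p+2) * Real.cos x + ((p:ℝ)+2)*((p:ℝ)+1) * (x^p * Real.cos x))
      MeasureTheory.volume 0 (π/2) := by
    apply Continuous.intervalIntegrable; fun_prop
  have key := intervalIntegral.integral_eq_sub_of_hasDerivAt h hint
  have hcos : Real.cos (π/2) = 0 := Real.cos_pi_div_two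
  have hsin : Real.sin (π/2) = 1 := Real.sin_pi_div_two
  rw [hcos, hsin] at key
  simp only [Real.sin_zero, Real.cos_zero, mul_zero, mul_one,
    zero_pow (Nat.succ_ne_zero (p+1)), zero_pow (Nat.succ_ne_zero p),
    zero_mul, add_zero, zero_add, sub_zero] at key
  rw [intervalIntegral.integral_add, intervalIntegral.integral_const_mul] at key
  · linarith
  all_goals apply Continuous.intervalIntegrable; fun_prop

theorem stmt_9 (m k : ℕ) (hm : 1 ≤ m) (hk : 2 ≤ k) :
    (((2*k:ℝ)-2)/((2*k:ℝ)-1)) * I m (k-1) - I m k =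
      ((2*m:ℝ)*((2*m:ℝ)-1)/((2*k:ℝ)-1)^2) * I (m-1) k ∧
    I m 1 + (2*m:ℝ)*((2*m:ℝ)-1) * I (m-1) 1 = (π/2)^(2*m) := by
  obtain ⟨m', rfl⟩ : ∃ m', m = m' + 1 := ⟨m - 1, by omega⟩
  obtain ⟨k', rfl⟩ : ∃ k', k = k' + 2 := ⟨k - 2, by omega⟩
  have e1 : 2 * (m' + 1) = 2 * m' + 2 := by ring
  have e2 : 2 * (k' + 2) - 1 = 2 * k' + 3 := by omega
  have e3 : (m' + 1) - 1 = m' := by omega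
  have e4 : (k' + 2) - 1 = k' + 1 := by omega
  have e5 : 2 * (k' + 1) - 1 = 2 * k' + 1 := by omega
  have e6 : 2 * 1 - 1 = 1 := by omega
  have hImk : I (m'+1) (k'+2) = ∫ x in (0:ℝ)..(π/2), x^(2*m'+2) * (Real.cos x)^(2*k'+3) := by
    rw [I, e1, e2]
  have hImk1 : I (m'+1) (k'+1) = ∫ x in (0:ℝ)..(π/2), x^(2*m'+2) * (Real.cos x)^(2*k'+1) := by
    rw [I, e1, e5]
  have hIm1k : I m' (k'+2) = ∫ x in (0:ℝ)..(π/2), x^(2*m') * (Real.cos x)^(2*k'+3) := by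
    rw [I, e2]
  have hIm1 : I (m'+1) 1 = ∫ x in (0:ℝ)..(π/2), x^(2*m'+2) * Real.cos x := by
    rw [I, e1, e6]; simp [pow_one]
  have hIm11 : I m' 1 = ∫ x in (0:ℝ)..(π/2), x^(2*m') * Real.cos x := by
    rw [I, e6]; simp [pow_one]
  constructor
  · -- first identity
    have h1 := rel1 (2*m'+1) (2*k'+1)
    have h2 := rel2 (2*m') (2*k'+2)
    -- rewrite exponents to match
    have ea : 2*m'+1+1 = 2*m'+2 := by ring
    have eb : 2*k'+1+1 = 2*k'+2 := by ring
    have ec : 2*k'+1+2 = 2*k'+3 := by ring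
    have ed : 2*m'+1 = 2*m'+1 := rfl
    have ee : 2*k'+2+1 = 2*k'+3 := by ring
    rw [ea, eb, ec] at h1
    rw [ee] at h2
    rw [e3, e4, hImk, hImk1, hIm1k]
    set A := ∫ x in (0:ℝ)..(π/2), x^(2*m'+1) * (Real.sin x * (Real.cos x)^(2*k'+2)) with hA
    set B := ∫ x in (0:ℝ)..(π/2), x^(2*m'+2) * (Real.cos x)^(2*k'+3) with hB
    set C := ∫ x in (0:ℝ)..(π/2), x^(2*m'+2) * (Real.cos x)^(2*k'+1) with hC
    set D := ∫ x in (0:ℝ)..(π/2), x^(2*m') * (Real.cos x)^(2*k'+3) with hD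
    have hkne : ((2*(k'+2):ℝ)-1) ≠ 0 := by push_cast; nlinarith [Nat.cast_nonneg (α := ℝ) k']
    push_cast at h1 h2 ⊢
    have hne : (2*(k':ℝ)+3) ≠ 0 := by positivity
    have hne' : ((2*((k':ℝ)+2))-1) = 2*(k':ℝ)+3 := by ring
    rw [hne']
    field_simp
    linear_combination (-(2*(k':ℝ)+3))*h1 - (2*(m':ℝ)+2)*h2
  · -- second identity
    have h3 := rel3 (2*m')
    rw [e3, hIm1, hIm11, e1]
    push_cast at h3 ⊢
    linarith
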